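/- (Theorem 3, noisy recovery under the observability condition.) Let A ∈ ℝ^{n×n}, B ∈ ℝ^{n×m}, C ∈ ℝ^{p×n}. Assume rank(O_K) = n, assume the product matrix CB ∈ ℝ^{p×m} satisfies the RIP with constant δ_{2s} < √2 − 1, and assume the rank condition holds. Then there exists a constant C_s, depending only on A, B, C, K and s, with the following property: for every ε > 0, every (r̄_k)_{k=0}^K and s-sparse (ū_k)_{k=0}^{K−1} with r̄_{k+1} = A r̄_k + B ū_k for k = 0,…,K−1, every (y_k)_{k=0}^K with y_k = C r̄_k + e_k and ‖e_k‖₂ ≤ ε for k = 0,…,K, and every solution ((r*_k),(u*_k)) of Problem (P2) with tolerance ε in which every u*_k is s-sparse, one has ∑_{k=0}^{K−1} ‖u*_k − ū_k‖₂ ≤ C_s ε. -/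

import Mathlib

open Matrix Finset

noncomputable def l2norm {k : ℕ} (x : Fin k → ℝ) : ℝ := Real.sqrt (∑ i, (x i) ^ 2)

def l1norm {k : ℕ} (x : Fin k → ℝ) : ℝ := ∑ i, |x i|

def Sparse {k : ℕ} (s : ℕ) (x : Fin k → ℝ) : Prop :=
  (Finset.univ.filter fun i => x i ≠ 0).card ≤ s

def RIP {n m : ℕ} (s : ℕ) (δ : ℝ) (Φ : Matrix (Fin n) (Fin m) ℝ) : Prop :=
  ∀ c : Fin m → ℝ, Sparse s c →
    (1 - δ) * (l2norm c) ^ 2 ≤ (l2norm (Φ.mulVec c)) ^ 2 ∧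
    (l2norm (Φ.mulVec c)) ^ 2 ≤ (1 + δ) * (l2norm c) ^ 2

/-- The observability matrix O_K = [C; CA; …; CA^K], with block rows C·Aⁱ. -/
def obsMat {n p : ℕ} (A : Matrix (Fin n) (Fin n) ℝ) (C : Matrix (Fin p) (Fin n) ℝ) (K : ℕ) :
    Matrix (Fin (K + 1) × Fin p) (Fin n) ℝ :=
  fun q j => (C * A ^ (q.1 : ℕ)) q.2 j

/-- The rank condition rank([O_K  J_K^{2s}]) = n + rank(J_K^{2s}) for all
J_K^{2s}, in operational form: the only way a state x together with a sequence
of 2s-sparse inputs can produce zero output for all times 0,…,K is x = 0. -/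
def SparseRankCondition {n p m : ℕ} (A : Matrix (Fin n) (Fin n) ℝ) (B : Matrix (Fin n) (Fin m) ℝ)
    (C : Matrix (Fin p) (Fin n) ℝ) (K s : ℕ) : Prop :=
  ∀ (x : Fin n → ℝ) (v : Fin K → Fin m → ℝ),
    (∀ k, Sparse (2 * s) (v k)) →
    (∀ i : Fin (K + 1),
      (C * A ^ (i : ℕ)).mulVec x +
        ∑ j ∈ Finset.univ.filter (fun j : Fin K => (j : ℕ) < (i : ℕ)),
          (C * A ^ ((i : ℕ) - 1 - (j : ℕ)) * B).mulVec (v j) = 0) →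
    x = 0

/-- Feasibility for Problem (P2): the dynamics hold and each output residual is
within the tolerance ε. -/
def FeasibleP2 {n p m K : ℕ} (A : Matrix (Fin n) (Fin n) ℝ) (B : Matrix (Fin n) (Fin m) ℝ)
    (C : Matrix (Fin p) (Fin n) ℝ) (y : Fin (K + 1) → Fin p → ℝ) (ε : ℝ)
    (r : Fin (K + 1) → Fin n → ℝ) (u : Fin K → Fin m → ℝ) : Prop :=
  (∀ k : Fin K, r k.succ = A.mulVec (r k.castSucc) + B.mulVec (u k)) ∧
    ∀ k, l2norm (y k - C.mulVec (r k)) ≤ ε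

/-- A solution of Problem (P2): feasible and minimizing the total ℓ1 norm of the
input sequence among all feasible pairs. -/
def SolutionP2 {n p m K : ℕ} (A : Matrix (Fin n) (Fin n) ℝ) (B : Matrix (Fin n) (Fin m) ℝ)
    (C : Matrix (Fin p) (Fin n) ℝ) (y : Fin (K + 1) → Fin p → ℝ) (ε : ℝ)
    (r : Fin (K + 1) → Fin n → ℝ) (u : Fin K → Fin m → ℝ) : Prop :=
  FeasibleP2 A B C y ε r u ∧
    ∀ (r' : Fin (K + 1) → Fin n → ℝ) (u' : Fin K → Fin m → ℝ),
      FeasibleP2 A B C y ε r' u' → ∑ k, l1norm (u k) ≤ ∑ k, l1norm (u' k)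

-- Auxiliary definitions and lemmas

noncomputable def outMap {n p m : ℕ} (K : ℕ) (A : Matrix (Fin n) (Fin n) ℝ)
    (B : Matrix (Fin n) (Fin m) ℝ) (C : Matrix (Fin p) (Fin n) ℝ) :
    ((Fin n → ℝ) × (Fin K → Fin m → ℝ)) →ₗ[ℝ] (Fin (K+1) → Fin p → ℝ) where
  toFun z := fun i => (C * A ^ (i:ℕ)).mulVec z.1 +
      ∑ j ∈ Finset.univ.filter (fun j : Fin K => (j:ℕ) < (i:ℕ)),
        (C * A ^ ((i:ℕ) - 1 - (j:ℕ)) * B).mulVec (z.2 j)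
  map_add' z w := by
    funext i
    simp only [Prod.fst_add, Prod.snd_add, Pi.add_apply, Matrix.mulVec_add,
      Finset.sum_add_distrib]
    abel
  map_smul' a z := by
    funext i
    simp only [Prod.smul_fst, Prod.smul_snd, Pi.smul_apply, Matrix.mulVec_smul,
      Finset.smul_sum, smul_add, RingHom.id_apply]

def suppSub {n m K : ℕ} (S : Fin K → Finset (Fin m)) :
    Submodule ℝ ((Fin n → ℝ) × (Fin K → Fin m → ℝ)) where
  carrier := {z | ∀ k i, i ∉ S k → z.2 k i = 0}
  add_mem' := by intro a b ha hb k i hi; simp [ha k i hi, hb k i hi]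
  zero_mem' := by intro k i hi; rfl
  smul_mem' := by intro c a ha k i hi; simp [ha k i hi]

lemma l2norm_eq_norm {k : ℕ} (x : EuclideanSpace ℝ (Fin k)) : l2norm x = ‖x‖ := by
  rw [EuclideanSpace.norm_eq]; simp [l2norm, sq_abs]

lemma l2norm_nonneg {k : ℕ} (x : Fin k → ℝ) : 0 ≤ l2norm x := Real.sqrt_nonneg _

lemma l2norm_zero {k : ℕ} : l2norm (0 : Fin k → ℝ) = 0 := by simp [l2norm]

lemma eq_zero_of_l2norm_eq_zero {k : ℕ} {x : Fin k → ℝ} (h : l2norm x = 0) : x = 0 := by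
  have hs : ∑ i, (x i) ^ 2 = 0 :=
    Real.sqrt_eq_zero (Finset.sum_nonneg fun i _ => sq_nonneg (x i)) |>.mp h
  funext i
  have := (Finset.sum_eq_zero_iff_of_nonneg fun i _ => sq_nonneg (x i)).mp hs i (mem_univ i)
  exact pow_eq_zero_iff (by norm_num) |>.mp this

lemma l2norm_sub_le {k : ℕ} (a b : Fin k → ℝ) : l2norm (a - b) ≤ l2norm a + l2norm b := by
  have := norm_sub_le (WithLp.toLp 2 a : EuclideanSpace ℝ (Fin k)) (WithLp.toLp 2 b)
  rw [← WithLp.toLp_sub, ← l2norm_eq_norm, ← l2norm_eq_norm, ← l2norm_eq_norm] at this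
  exact this

lemma pi_norm_le_l2norm {k : ℕ} (x : Fin k → ℝ) : ‖x‖ ≤ l2norm x := by
  rcases isEmpty_or_nonempty (Fin k) with h | h
  · simp [Subsingleton.elim x 0, l2norm_zero]
  rw [pi_norm_le_iff_of_nonneg (l2norm_nonneg x)]
  intro i
  rw [Real.norm_eq_abs, ← Real.sqrt_sq_eq_abs]
  exact Real.sqrt_le_sqrt (Finset.single_le_sum (fun j _ => sq_nonneg (x j)) (mem_univ i))

lemma l2norm_le_pi_norm {k : ℕ} (x : Fin k → ℝ) : l2norm x ≤ Real.sqrt k * ‖x‖ := by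
  rw [← Real.sqrt_sq (norm_nonneg x), ← Real.sqrt_mul (by positivity)]
  apply Real.sqrt_le_sqrt
  calc ∑ i, (x i) ^ 2 ≤ ∑ _i : Fin k, ‖x‖ ^ 2 := by
        apply Finset.sum_le_sum
        intro i _
        rw [← sq_abs]
        exact pow_le_pow_left₀ (abs_nonneg _) (norm_le_pi_norm x i) 2
    _ = k * ‖x‖ ^ 2 := by simp [mul_comm]

lemma sparse_sub {k s : ℕ} {a b : Fin k → ℝ} (ha : Sparse s a) (hb : Sparse s b) :
    Sparse (2 * s) (a - b) := by
  unfold Sparse at *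
  have hsub : (Finset.univ.filter fun i => (a - b) i ≠ 0) ⊆
      (Finset.univ.filter fun i => a i ≠ 0) ∪ (Finset.univ.filter fun i => b i ≠ 0) := by
    intro i hi
    simp only [mem_filter, mem_univ, true_and, mem_union, Pi.sub_apply] at *
    by_contra hcon
    push_neg at hcon
    simp [hcon.1, hcon.2] at hi
  calc _ ≤ _ := Finset.card_le_card hsub
    _ ≤ _ := Finset.card_union_le _ _
    _ ≤ 2 * s := by omega

set_option synthInstance.maxHeartbeats 1000000 in
lemma exists_bound_of_injective {E F : Type*} [NormedAddCommGroup E] [NormedSpace ℝ E]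
    [NormedAddCommGroup F] [NormedSpace ℝ F] [FiniteDimensional ℝ E] [FiniteDimensional ℝ F]
    (f : E →ₗ[ℝ] F) (hf : Function.Injective f) :
    ∃ c : ℝ, 0 ≤ c ∧ ∀ z, ‖z‖ ≤ c * ‖f z‖ := by
  let e := LinearEquiv.ofInjective f hf
  let g := LinearMap.toContinuousLinearMap (e.symm : LinearMap.range f →ₗ[ℝ] E)
  refine ⟨‖g‖, g.opNorm_nonneg, fun z => ?_⟩
  have hz : g ⟨f z, LinearMap.mem_range_self f z⟩ = z := by
    show e.symm _ = z
    rw [LinearEquiv.symm_apply_eq]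
    exact Subtype.ext (LinearEquiv.ofInjective_apply f z).symm
  calc ‖z‖ = ‖g ⟨f z, LinearMap.mem_range_self f z⟩‖ := by rw [hz]
    _ ≤ ‖g‖ * ‖(⟨f z, LinearMap.mem_range_self f z⟩ : LinearMap.range f)‖ := g.le_opNorm _
    _ = ‖g‖ * ‖f z‖ := rfl

lemma mulVec_sum' {n p : ℕ} (M : Matrix (Fin p) (Fin n) ℝ) {ι : Type*} (t : Finset ι)
    (f : ι → Fin n → ℝ) : M.mulVec (∑ j ∈ t, f j) = ∑ j ∈ t, M.mulVec (f j) := by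
  simpa only [Matrix.mulVecLin_apply] using map_sum (Matrix.mulVecLin M) f t

lemma filter_lt_succ {K : ℕ} (k : Fin K) :
    (Finset.univ.filter fun j : Fin K => (j:ℕ) < (k:ℕ) + 1) =
      insert k (Finset.univ.filter fun j : Fin K => (j:ℕ) < (k:ℕ)) := by
  ext j
  simp only [mem_filter, mem_univ, true_and, mem_insert, Fin.ext_iff]
  omega


set_option maxHeartbeats 1000000 in
/-- Theorem 3 of the paper (noisy recovery under the
observability condition). -/
theorem stmt11 {n p m K s : ℕ}
    (A : Matrix (Fin n) (Fin n) ℝ) (B : Matrix (Fin n) (Fin m) ℝ)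
    (C : Matrix (Fin p) (Fin n) ℝ)
    (hObs : (obsMat A C K).rank = n)
    (δ : ℝ) (hδ : δ < Real.sqrt 2 - 1) (hCB : RIP (2 * s) δ (C * B))
    (hRank : SparseRankCondition A B C K s) :
    ∃ Cs : ℝ, ∀ ε : ℝ, 0 < ε →
      ∀ (rbar : Fin (K + 1) → Fin n → ℝ) (ubar : Fin K → Fin m → ℝ)
        (y e : Fin (K + 1) → Fin p → ℝ),
        (∀ k, Sparse s (ubar k)) →
        (∀ k : Fin K, rbar k.succ = A.mulVec (rbar k.castSucc) + B.mulVec (ubar k)) →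
        (∀ k, y k = C.mulVec (rbar k) + e k) →
        (∀ k, l2norm (e k) ≤ ε) →
        ∀ (rstar : Fin (K + 1) → Fin n → ℝ) (ustar : Fin K → Fin m → ℝ),
          SolutionP2 A B C y ε rstar ustar →
          (∀ k, Sparse s (ustar k)) →
          ∑ k, l2norm (ustar k - ubar k) ≤ Cs * ε := by
  classical
  set Φ := outMap K A B C with hΦdef
  have hδ1 : δ < 1 := by
    have h2 : Real.sqrt 2 < 2 := by
      nlinarith [Real.sq_sqrt (by norm_num : (2:ℝ) ≥ 0), Real.sqrt_nonneg 2]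
    linarith
  -- kernel triviality on sparse inputs
  have hker : ∀ (x : Fin n → ℝ) (v : Fin K → Fin m → ℝ), (∀ k, Sparse (2*s) (v k)) →
      Φ (x, v) = 0 → x = 0 ∧ ∀ k, v k = 0 := by
    intro x v hsp h0
    have hout : ∀ i : Fin (K + 1),
        (C * A ^ (i : ℕ)).mulVec x +
          ∑ j ∈ Finset.univ.filter (fun j : Fin K => (j : ℕ) < (i : ℕ)),
            (C * A ^ ((i : ℕ) - 1 - (j : ℕ)) * B).mulVec (v j) = 0 := by
      intro i; exact congrFun h0 i
    have hx : x = 0 := hRank x v hsp hout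
    refine ⟨hx, ?_⟩
    have H : ∀ N : ℕ, ∀ k : Fin K, (k : ℕ) ≤ N → v k = 0 := by
      intro N
      induction N using Nat.strong_induction_on with
      | _ N IH =>
        intro k hk
        have hkK : (k:ℕ) + 1 < K + 1 := by omega
        have heq := hout ⟨(k:ℕ)+1, hkK⟩
        rw [filter_lt_succ k, Finset.sum_insert (by simp)] at heq
        have hprev : ∀ j ∈ Finset.univ.filter (fun j : Fin K => (j:ℕ) < (k:ℕ)),
            (C * A ^ ((k:ℕ)+1 - 1 - (j:ℕ)) * B).mulVec (v j) = 0 := by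
          intro j hj
          simp only [mem_filter, mem_univ, true_and] at hj
          rcases Nat.eq_zero_or_pos N with hN | hN
          · omega
          · have : v j = 0 := IH (N-1) (by omega) j (by omega)
            rw [this, Matrix.mulVec_zero]
        rw [Finset.sum_eq_zero hprev, add_zero, hx, Matrix.mulVec_zero, zero_add] at heq
        have hCBk : (C * B).mulVec (v k) = 0 := by
          have he0 : (k:ℕ) + 1 - 1 - (k:ℕ) = 0 := by omega
          rw [show ((⟨(k:ℕ)+1, hkK⟩ : Fin (K+1)) : ℕ) = (k:ℕ) + 1 from rfl, he0, pow_zero,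
            Matrix.mul_one] at heq
          exact heq
        have hCB1 := (hCB (v k) (hsp k)).1
        rw [hCBk, l2norm_zero] at hCB1
        have h1δ : 0 < 1 - δ := by linarith
        have h2' : (1 - δ) * l2norm (v k) ^ 2 ≤ (1 - δ) * 0 := by
          rw [mul_zero]; nlinarith [hCB1]
        have h3' : l2norm (v k) ^ 2 ≤ 0 := le_of_mul_le_mul_left h2' h1δ
        have h4' : l2norm (v k) ^ 2 = 0 := le_antisymm h3' (sq_nonneg _)
        exact eq_zero_of_l2norm_eq_zero (pow_eq_zero_iff (by norm_num : (2:ℕ) ≠ 0) |>.mp h4')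
    exact fun k => H (k:ℕ) k le_rfl
  -- constant for each support pattern
  have hc : ∀ S : Fin K → Finset (Fin m), ∃ c : ℝ, 0 ≤ c ∧
      ((∀ k, (S k).card ≤ 2*s) → ∀ z ∈ suppSub (n := n) S, ‖z‖ ≤ c * ‖Φ z‖) := by
    intro S
    by_cases hS : ∀ k, (S k).card ≤ 2*s
    · have hinj : Function.Injective (Φ.domRestrict (suppSub (n := n) S)) := by
        intro a b hab
        have hmem : (a : (Fin n → ℝ) × (Fin K → Fin m → ℝ)) - b ∈ suppSub (n := n) S :=
          Submodule.sub_mem _ a.2 b.2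
        have h0 : Φ ((a : _) - (b : _)) = 0 := by
          rw [map_sub, sub_eq_zero]
          exact hab
        set d := (a : (Fin n → ℝ) × (Fin K → Fin m → ℝ)) - b with hd
        have hsp : ∀ k, Sparse (2*s) (d.2 k) := by
          intro k
          unfold Sparse
          calc (Finset.univ.filter fun i => d.2 k i ≠ 0).card ≤ (S k).card := by
                apply Finset.card_le_card
                intro i hi
                simp only [mem_filter, mem_univ, true_and] at hi
                by_contra hcon
                exact hi (hmem k i hcon)
            _ ≤ 2*s := hS k
        have := hker d.1 d.2 hsp (by rw [show (d.1, d.2) = d from rfl]; exact h0)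
        have hdz : d = 0 := by
          have h2 : d.2 = 0 := funext this.2
          calc d = (d.1, d.2) := rfl
            _ = 0 := by rw [this.1, h2]; rfl
        have : (a : (Fin n → ℝ) × (Fin K → Fin m → ℝ)) = b := by
          rwa [← sub_eq_zero]
        exact Subtype.ext this
      obtain ⟨c, hc0, hcb⟩ := exists_bound_of_injective _ hinj
      exact ⟨c, hc0, fun _ z hz => hcb ⟨z, hz⟩⟩
    · exact ⟨0, le_rfl, fun h => absurd h hS⟩
  choose cfun hc0 hcb using hc
  set Ctot := ∑ S : Fin K → Finset (Fin m), cfun S with hCtot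
  have hCtot0 : 0 ≤ Ctot := Finset.sum_nonneg fun S _ => hc0 S
  refine ⟨2 * K * Real.sqrt m * Ctot, ?_⟩
  intro ε hε rbar ubar y e hubar hbar hy he rstar ustar hsol hustar
  obtain ⟨⟨hdynstar, hresid⟩, _⟩ := hsol
  set x : Fin n → ℝ := rstar ⟨0, Nat.succ_pos K⟩ - rbar ⟨0, Nat.succ_pos K⟩ with hxdef
  set v : Fin K → Fin m → ℝ := fun k => ustar k - ubar k with hvdef
  -- state difference closed form
  have hstate : ∀ N : ℕ, ∀ h : N < K + 1,
      rstar ⟨N, h⟩ - rbar ⟨N, h⟩ = (A ^ N).mulVec x +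
        ∑ j ∈ Finset.univ.filter (fun j : Fin K => (j:ℕ) < N),
          (A ^ (N - 1 - (j:ℕ)) * B).mulVec (v j) := by
    intro N
    induction N with
    | zero =>
      intro h
      have : (Finset.univ.filter fun j : Fin K => (j:ℕ) < 0) = ∅ := by
        apply Finset.filter_false_of_mem; intro j _; omega
      rw [this, Finset.sum_empty, add_zero, pow_zero, Matrix.one_mulVec]
    | succ N ih =>
      intro h
      have hNK : N < K := by omega
      set k : Fin K := ⟨N, hNK⟩ with hkdef
      have h1 : rstar ⟨N+1, h⟩ = A.mulVec (rstar ⟨N, by omega⟩) + B.mulVec (ustar k) :=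
        hdynstar k
      have h2 : rbar ⟨N+1, h⟩ = A.mulVec (rbar ⟨N, by omega⟩) + B.mulVec (ubar k) :=
        hbar k
      rw [h1, h2]
      have hsub : A.mulVec (rstar ⟨N, by omega⟩) + B.mulVec (ustar k) -
          (A.mulVec (rbar ⟨N, by omega⟩) + B.mulVec (ubar k)) =
          A.mulVec (rstar ⟨N, by omega⟩ - rbar ⟨N, by omega⟩) + B.mulVec (v k) := by
        rw [Matrix.mulVec_sub A, Matrix.mulVec_sub B]
        abel
      rw [hsub, ih (by omega)]
      rw [Matrix.mulVec_add, Matrix.mulVec_mulVec, mulVec_sum']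
      rw [show (Finset.univ.filter fun j : Fin K => (j:ℕ) < N + 1) =
        insert k (Finset.univ.filter fun j : Fin K => (j:ℕ) < N) from filter_lt_succ k]
      rw [Finset.sum_insert (by simp [hkdef])]
      have hterm : ∀ j ∈ Finset.univ.filter (fun j : Fin K => (j:ℕ) < N),
          A.mulVec ((A ^ (N - 1 - (j:ℕ)) * B).mulVec (v j)) =
            (A ^ (N + 1 - 1 - (j:ℕ)) * B).mulVec (v j) := by
        intro j hj
        simp only [mem_filter, mem_univ, true_and] at hj
        rw [Matrix.mulVec_mulVec, ← Matrix.mul_assoc, ← pow_succ']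
        have hexp : N - 1 - (j:ℕ) + 1 = N + 1 - 1 - (j:ℕ) := by omega
        rw [hexp]
      rw [Finset.sum_congr rfl hterm]
      have hk0 : (A ^ (N + 1 - 1 - (k:ℕ)) * B) = B := by
        have : N + 1 - 1 - (k:ℕ) = 0 := by simp only [hkdef, Fin.val_mk]; omega
        rw [this, pow_zero, Matrix.one_mul]
      rw [hk0, ← pow_succ']
      abel
  -- outputs of difference
  have hout : ∀ i : Fin (K+1), Φ (x, v) i = C.mulVec (rstar i) - C.mulVec (rbar i) := by
    intro i
    have hi := hstate (i : ℕ) i.isLt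
    have : C.mulVec (rstar i) - C.mulVec (rbar i) = C.mulVec (rstar i - rbar i) := by
      rw [Matrix.mulVec_sub]
    rw [this]
    rw [show (⟨(i:ℕ), i.isLt⟩ : Fin (K+1)) = i from Fin.eta i i.isLt] at hi
    rw [hi, Matrix.mulVec_add, Matrix.mulVec_mulVec, mulVec_sum']
    show (C * A ^ (i:ℕ)).mulVec x + _ = _
    congr 1
    apply Finset.sum_congr rfl
    intro j _
    rw [Matrix.mulVec_mulVec, ← Matrix.mul_assoc]
  -- residual bounds
  have hres : ∀ i : Fin (K+1), l2norm (C.mulVec (rstar i) - C.mulVec (rbar i)) ≤ 2 * ε := by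
    intro i
    have h1 : l2norm (y i - C.mulVec (rstar i)) ≤ ε := hresid i
    have h2 : l2norm (y i - C.mulVec (rbar i)) ≤ ε := by
      have : y i - C.mulVec (rbar i) = e i := by rw [hy i]; abel
      rw [this]; exact he i
    have h3 : C.mulVec (rstar i) - C.mulVec (rbar i) =
        (y i - C.mulVec (rbar i)) - (y i - C.mulVec (rstar i)) := by abel
    rw [h3]
    calc _ ≤ _ := l2norm_sub_le _ _
      _ ≤ 2 * ε := by linarith
  -- norm of Φ z
  have hΦz : ‖Φ (x, v)‖ ≤ 2 * ε := by
    rw [pi_norm_le_iff_of_nonneg (by linarith)]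
    intro i
    calc ‖Φ (x, v) i‖ ≤ l2norm (Φ (x, v) i) := pi_norm_le_l2norm _
      _ = l2norm (C.mulVec (rstar i) - C.mulVec (rbar i)) := by rw [hout i]
      _ ≤ 2 * ε := hres i
  -- support pattern
  set S : Fin K → Finset (Fin m) := fun k => Finset.univ.filter (fun i => v k i ≠ 0) with hSdef
  have hScard : ∀ k, (S k).card ≤ 2*s := fun k => sparse_sub (hustar k) (hubar k)
  have hmemS : (x, v) ∈ suppSub (n := n) S := by
    intro k i hi
    simp only [hSdef, mem_filter, mem_univ, true_and, not_not] at hi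
    exact hi
  have hzb : ‖(x, v)‖ ≤ cfun S * ‖Φ (x, v)‖ := hcb S hScard (x, v) hmemS
  have hcS : cfun S ≤ Ctot := Finset.single_le_sum (fun S _ => hc0 S) (mem_univ S)
  -- final chain
  have hvk : ∀ k : Fin K, l2norm (v k) ≤ Real.sqrt m * ‖(x, v)‖ := by
    intro k
    calc l2norm (v k) ≤ Real.sqrt m * ‖v k‖ := l2norm_le_pi_norm _
      _ ≤ Real.sqrt m * ‖(x, v)‖ := by
          apply mul_le_mul_of_nonneg_left _ (Real.sqrt_nonneg _)
          calc ‖v k‖ ≤ ‖v‖ := norm_le_pi_norm v k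
            _ ≤ ‖(x, v)‖ := norm_snd_le (x, v)
  calc ∑ k, l2norm (ustar k - ubar k) = ∑ k, l2norm (v k) := rfl
    _ ≤ ∑ _k : Fin K, Real.sqrt m * ‖(x, v)‖ := Finset.sum_le_sum fun k _ => hvk k
    _ = K * (Real.sqrt m * ‖(x, v)‖) := by
        rw [Finset.sum_const, Finset.card_univ, Fintype.card_fin, nsmul_eq_mul]
    _ ≤ 2 * K * Real.sqrt m * Ctot * ε := by
        have hz0 : (0:ℝ) ≤ ‖(x, v)‖ := norm_nonneg _
        have hΦ0 : (0:ℝ) ≤ ‖Φ (x, v)‖ := norm_nonneg _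
        have hsq : (0:ℝ) ≤ Real.sqrt m := Real.sqrt_nonneg _
        have hK : (0:ℝ) ≤ (K:ℝ) := Nat.cast_nonneg _
        have hc0S : (0:ℝ) ≤ cfun S := hc0 S
        nlinarith [mul_le_mul_of_nonneg_left hzb (mul_nonneg hK hsq),
          mul_le_mul_of_nonneg_left hΦz (mul_nonneg (mul_nonneg hK hsq) hc0S),
          mul_le_mul_of_nonneg_right hcS (mul_nonneg (mul_nonneg hK hsq) (by linarith : (0:ℝ) ≤ 2*ε))]
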